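/- Let ρ ∈ (−1,1) and G_{1/2}(y) = 4·(log((√(1 + ρy + y²/4) − ρ − y/2)/(1 − ρ)))². Then G_{1/2} satisfies the ODE (1/4)·G'(y)²·(y²/4 + ρy + 1) = G(y) with G(0) = 0, which is equation (1/4)G'(y)²·(y²/(2H+1)² + 2ρy/(2H+1) + 1) = (1−2H)·y·G'(y)/2 + 2H·G(y) for H = 1/2. -/

import Mathlib

/-- G_{1/2}(y) = 4·(log((√(1+ρy+y²/4) − ρ − y/2)/(1−ρ)))² satisfies
(1/4)·G'(y)²·(y²/4 + ρy + 1) = G(y) with G(0) = 0, which is the ODE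
(1/4)G'²·(y²/(2H+1)² + 2ρy/(2H+1) + 1) = (1−2H)yG'/2 + 2HG for H = 1/2. -/
theorem sabr_Ghalf_ode (ρ : ℝ) (hρ : ρ ∈ Set.Ioo (-1 : ℝ) 1) (a b : ℝ) (ha : a < 0) (hb : 0 < b)
    (G : ℝ → ℝ)
    (hG : ∀ y, G y =
      4 * (Real.log ((Real.sqrt (1 + ρ * y + y ^ 2 / 4) - ρ - y / 2) / (1 - ρ))) ^ 2)
    (hpos : ∀ y ∈ Set.Ioo a b, 0 < Real.sqrt (1 + ρ * y + y ^ 2 / 4) - ρ - y / 2) :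
    G 0 = 0 ∧
    ∀ y ∈ Set.Ioo a b, (1 / 4) * (deriv G y) ^ 2 * (y ^ 2 / 4 + ρ * y + 1) = G y := by
  obtain ⟨hρ1, hρ2⟩ := hρ
  have h1ρ : (0:ℝ) < 1 - ρ := by linarith
  constructor
  · rw [hG 0]
    norm_num [div_self h1ρ.ne']
  intro y hy
  have hq : (0:ℝ) < 1 + ρ * y + y ^ 2 / 4 := by nlinarith [sq_nonneg (ρ + y/2), sq_nonneg ρ]
  set s := Real.sqrt (1 + ρ * y + y ^ 2 / 4) with hs_def
  have hspos : 0 < s := Real.sqrt_pos.mpr hq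
  have hs2 : s ^ 2 = 1 + ρ * y + y ^ 2 / 4 := Real.sq_sqrt hq.le
  have hu : 0 < s - ρ - y / 2 := hpos y hy
  -- derivative of inner polynomial
  have h1 : HasDerivAt (fun x : ℝ => 1 + ρ * x + x ^ 2 / 4) (ρ + y / 2) y := by
    have hA : HasDerivAt (fun x : ℝ => 1 + ρ * x) (ρ * 1) y :=
      ((hasDerivAt_id y).const_mul ρ).const_add 1
    have hB : HasDerivAt (fun x : ℝ => x ^ 2 / 4) ((2 * y ^ 1) / 4) y :=
      (hasDerivAt_pow 2 y).div_const 4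
    have := hA.add hB
    exact this.congr_deriv (by ring)
  have hsq : HasDerivAt (fun x : ℝ => Real.sqrt (1 + ρ * x + x ^ 2 / 4))
      ((ρ + y / 2) / (2 * s)) y := h1.sqrt hq.ne'
  have hu' : HasDerivAt (fun x : ℝ => Real.sqrt (1 + ρ * x + x ^ 2 / 4) - ρ - x / 2)
      ((ρ + y / 2) / (2 * s) - 1 / 2) y := by
    have := (hsq.sub_const ρ).sub ((hasDerivAt_id y).div_const 2)
    exact this
  have hdiv : HasDerivAt (fun x : ℝ => (Real.sqrt (1 + ρ * x + x ^ 2 / 4) - ρ - x / 2) / (1 - ρ))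
      (((ρ + y / 2) / (2 * s) - 1 / 2) / (1 - ρ)) y := hu'.div_const (1 - ρ)
  have hval : 0 < (s - ρ - y / 2) / (1 - ρ) := div_pos hu h1ρ
  have hlog : HasDerivAt
      (fun x : ℝ => Real.log ((Real.sqrt (1 + ρ * x + x ^ 2 / 4) - ρ - x / 2) / (1 - ρ)))
      ((((ρ + y / 2) / (2 * s) - 1 / 2) / (1 - ρ)) / ((s - ρ - y / 2) / (1 - ρ))) y :=
    hdiv.log hval.ne'
  set L := Real.log ((s - ρ - y / 2) / (1 - ρ)) with hL
  have hGfun : G = fun x : ℝ =>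
      4 * (Real.log ((Real.sqrt (1 + ρ * x + x ^ 2 / 4) - ρ - x / 2) / (1 - ρ))) ^ 2 :=
    funext hG
  set D := (((ρ + y / 2) / (2 * s) - 1 / 2) / (1 - ρ)) / ((s - ρ - y / 2) / (1 - ρ)) with hD
  have hGderiv : HasDerivAt G (4 * (2 * L ^ 1 * D)) y := by
    rw [hGfun]
    exact (hlog.pow 2).const_mul 4
  have hderiv : deriv G y = 4 * (2 * L * D) := by
    simpa using hGderiv.deriv
  have hDval : D = -1 / (2 * s) := by
    have key : (ρ + y / 2) / (2 * s) - 1 / 2 = -(s - ρ - y / 2) / (2 * s) := by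
      field_simp
      ring
    rw [hD, key]
    rw [div_eq_div_iff (div_ne_zero hu.ne' h1ρ.ne') (mul_pos two_pos hspos).ne']
    field_simp
  have hq' : y ^ 2 / 4 + ρ * y + 1 = s ^ 2 := by rw [hs2]; ring
  rw [hderiv, hG y, hDval, ← hs_def, ← hL, hq']
  field_simp
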